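/- The function F(h) = E[tanh(z·√h + h)] (z standard Gaussian), extended by F(0) = 0, is invertible on [0,∞), its inverse F⁻¹ is nonnegative and increasing on [0,1), and F⁻¹(x) → +∞ as x → 1⁻. -/

import Mathlib

open MeasureTheory ProbabilityTheory Real Set Filter Topology
open scoped ENNReal NNReal

lemma myTanh_lt_one (x : ℝ) : Real.tanh x < 1 := by
  rw [Real.tanh_eq_sinh_div_cosh, div_lt_one (Real.cosh_pos x)]
  rw [Real.sinh_eq, Real.cosh_eq]
  have := Real.exp_pos (-x)
  linarith

lemma myNeg_one_lt_tanh (x : ℝ) : -1 < Real.tanh x := by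
  rw [Real.tanh_eq_sinh_div_cosh, lt_div_iff₀ (Real.cosh_pos x)]
  rw [Real.sinh_eq, Real.cosh_eq]
  have := Real.exp_pos x
  nlinarith [Real.exp_pos (-x)]

lemma myAbs_tanh_le_one (x : ℝ) : |Real.tanh x| ≤ 1 :=
  abs_le.2 ⟨(myNeg_one_lt_tanh x).le, (myTanh_lt_one x).le⟩

lemma myHasDerivAt_tanh (x : ℝ) : HasDerivAt Real.tanh (1 / Real.cosh x ^ 2) x := by
  have h : HasDerivAt (fun y => Real.sinh y / Real.cosh y)
      ((Real.cosh x * Real.cosh x - Real.sinh x * Real.sinh x) / Real.cosh x ^ 2) x :=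
    (Real.hasDerivAt_sinh x).div (Real.hasDerivAt_cosh x) (Real.cosh_pos x).ne'
  have h2 : Real.cosh x * Real.cosh x - Real.sinh x * Real.sinh x = 1 := by
    have := Real.cosh_sq_sub_sinh_sq x; nlinarith
  have h3 : Real.tanh = fun y => Real.sinh y / Real.cosh y :=
    funext Real.tanh_eq_sinh_div_cosh
  rw [h3]
  rw [h2] at h
  exact h

lemma myContinuous_tanh : Continuous Real.tanh :=
  continuous_iff_continuousAt.2 fun x => (myHasDerivAt_tanh x).continuousAt

lemma myTanh_eq (x : ℝ) :
    Real.tanh x = (1 - Real.exp (-(2*x))) / (1 + Real.exp (-(2*x))) := by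
  rw [Real.tanh_eq_sinh_div_cosh, Real.sinh_eq, Real.cosh_eq]
  have h1 : Real.exp (-x) = (Real.exp x)⁻¹ := Real.exp_neg x
  have h2 : Real.exp (-(2*x)) = ((Real.exp x)⁻¹)^2 := by
    rw [show -(2*x) = -x + -x by ring, Real.exp_add, h1]; ring
  rw [h1, h2]
  have h3 := Real.exp_pos x
  have h4 : Real.exp x ≠ 0 := h3.ne'
  field_simp

lemma myTendsto_tanh_atTop : Tendsto Real.tanh atTop (𝓝 1) := by
  have h0 : Tendsto (fun x : ℝ => Real.exp (-(2*x))) atTop (𝓝 0) := by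
    have h3 : Tendsto (fun x : ℝ => 2*x) atTop atTop :=
      tendsto_id.const_mul_atTop two_pos
    exact Real.tendsto_exp_atBot.comp (tendsto_neg_atTop_atBot.comp h3)
  have : Tendsto (fun x : ℝ => (1 - Real.exp (-(2*x))) / (1 + Real.exp (-(2*x))))
      atTop (𝓝 ((1 - 0) / (1 + 0))) :=
    (tendsto_const_nhds.sub h0).div (tendsto_const_nhds.add h0) (by norm_num)
  simpa [myTanh_eq] using this.congr (fun x => (myTanh_eq x).symm)

lemma myPhi_eq : gaussianPDFReal 0 1
    = fun z => (Real.sqrt (2*π))⁻¹ * Real.exp (-(z^2)/2) := by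
  funext z
  simp [gaussianPDFReal, neg_div]

lemma myPhi_pos (z : ℝ) : 0 < gaussianPDFReal 0 1 z :=
  gaussianPDFReal_pos 0 1 z one_ne_zero

lemma myHasDerivAt_phi (z : ℝ) :
    HasDerivAt (gaussianPDFReal 0 1) (-z * gaussianPDFReal 0 1 z) z := by
  rw [myPhi_eq]
  have h1 : HasDerivAt (fun y : ℝ => -(y^2)/2) (-z) z := by
    have := ((hasDerivAt_pow 2 z).neg).div_const 2
    simpa using this.congr_deriv (by push_cast; ring)
  have h2 := (h1.exp).const_mul (Real.sqrt (2*π))⁻¹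
  simpa [mul_comm, mul_assoc, mul_left_comm] using h2

lemma myTendsto_phi_atTop : Tendsto (gaussianPDFReal 0 1) atTop (𝓝 0) := by
  rw [myPhi_eq]
  have h1 : Tendsto (fun z : ℝ => -(z^2)/2) atTop atBot := by
    refine tendsto_atBot_mono' atTop (f₁ := fun z : ℝ => -z) ?_ tendsto_neg_atTop_atBot
    filter_upwards [eventually_ge_atTop (2:ℝ)] with z hz; nlinarith
  simpa using (Real.tendsto_exp_atBot.comp h1).const_mul (Real.sqrt (2*π))⁻¹

set_option maxHeartbeats 1000000 in
lemma myTendsto_phi_atBot : Tendsto (gaussianPDFReal 0 1) atBot (𝓝 0) := by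
  rw [myPhi_eq]
  have h1 : Tendsto (fun z : ℝ => -(z^2)/2) atBot atBot := by
    refine tendsto_atBot_mono' atBot (f₁ := fun z : ℝ => z) ?_ tendsto_id
    filter_upwards [eventually_le_atBot (-2:ℝ)] with z hz; nlinarith
  simpa using (Real.tendsto_exp_atBot.comp h1).const_mul (Real.sqrt (2*π))⁻¹

lemma myGauss_integral_eq (f : ℝ → ℝ) :
    ∫ z, f z ∂(gaussianReal 0 1) = ∫ z, gaussianPDFReal 0 1 z * f z := by
  rw [gaussianReal_of_var_ne_zero 0 one_ne_zero]
  have h1 : gaussianPDF 0 1 = fun x => ((gaussianPDFReal 0 1 x).toNNReal : ℝ≥0∞) := by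
    funext x; rfl
  rw [h1, integral_withDensity_eq_integral_smul
    ((measurable_gaussianPDFReal 0 1).real_toNNReal) f]
  congr 1
  funext x
  simp [NNReal.smul_def, Real.coe_toNNReal _ (gaussianPDFReal_nonneg 0 1 x)]

lemma myIntegrable_gauss_iff {f : ℝ → ℝ} (_hf : AEStronglyMeasurable f (gaussianReal 0 1)) :
    Integrable f (gaussianReal 0 1) ↔
      Integrable (fun z => gaussianPDFReal 0 1 z * f z) volume := by
  rw [gaussianReal_of_var_ne_zero 0 one_ne_zero]
  have h1 : gaussianPDF 0 1 = fun x => ((gaussianPDFReal 0 1 x).toNNReal : ℝ≥0∞) := by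
    funext x; rfl
  rw [h1, integrable_withDensity_iff_integrable_smul
    ((measurable_gaussianPDFReal 0 1).real_toNNReal)]
  constructor <;> intro h <;> refine h.congr (Eventually.of_forall fun x => ?_) <;>
    simp [NNReal.smul_def, Real.coe_toNNReal _ (gaussianPDFReal_nonneg 0 1 x)]

lemma myIntegrable_bounded {f : ℝ → ℝ} (hm : AEStronglyMeasurable f (gaussianReal 0 1))
    {C : ℝ} (hb : ∀ z, |f z| ≤ C) : Integrable f (gaussianReal 0 1) :=
  (integrable_const C).mono' hm (Eventually.of_forall fun z => by
    simpa [Real.norm_eq_abs] using hb z)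

lemma myIntegrable_abs_phi :
    Integrable (fun z => |z| * gaussianPDFReal 0 1 z) volume := by
  have b := ((integrable_mul_exp_neg_mul_sq (b := (1/2:ℝ)) (by norm_num)).abs.const_mul
    ((Real.sqrt (2*π))⁻¹))
  refine b.congr (Eventually.of_forall fun x => ?_)
  show (Real.sqrt (2*π))⁻¹ * |x * Real.exp (-(1/2:ℝ) * x^2)| = |x| * gaussianPDFReal 0 1 x
  rw [abs_mul, abs_of_pos (Real.exp_pos _), myPhi_eq]
  have : Real.exp (-(1/2:ℝ) * x^2) = Real.exp (-(x^2)/2) := by congr 1; ring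
  rw [this]; ring

lemma myIntegrable_abs : Integrable (fun z => |z|) (gaussianReal 0 1) := by
  rw [myIntegrable_gauss_iff (continuous_abs.aestronglyMeasurable)]
  exact myIntegrable_abs_phi.congr (Eventually.of_forall fun x => by ring_nf)

lemma myIntegrable_mul_bounded {f : ℝ → ℝ} (hm : AEStronglyMeasurable f (gaussianReal 0 1))
    {C : ℝ} (hb : ∀ z, |f z| ≤ C) : Integrable (fun z => z * f z) (gaussianReal 0 1) := by
  refine (myIntegrable_abs.mul_const C).mono'
    (aestronglyMeasurable_id.mul hm) (Eventually.of_forall fun z => ?_)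
  rw [Real.norm_eq_abs, abs_mul]
  exact mul_le_mul_of_nonneg_left (hb z) (abs_nonneg z)

lemma myGauss_ibp {g g' : ℝ → ℝ} (hg : ∀ z, HasDerivAt g (g' z) z)
    (hg'm : AEStronglyMeasurable g' volume) {C C' : ℝ}
    (hgb : ∀ z, |g z| ≤ C) (hg'b : ∀ z, |g' z| ≤ C') :
    ∫ z, z * g z ∂(gaussianReal 0 1) = ∫ z, g' z ∂(gaussianReal 0 1) := by
  have hgc : Continuous g := continuous_iff_continuousAt.2 fun z => (hg z).continuousAt
  set φ : ℝ → ℝ := gaussianPDFReal 0 1 with hφ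
  have hφm : Measurable φ := measurable_gaussianPDFReal 0 1
  have hφnn : ∀ z, 0 ≤ φ z := fun z => (myPhi_pos z).le
  have hφint : Integrable φ volume := integrable_gaussianPDFReal 0 1
  set H : ℝ → ℝ := fun z => φ z * g z with hH
  set H' : ℝ → ℝ := fun z => φ z * g' z - φ z * (z * g z) with hH'
  have hHd : ∀ z, HasDerivAt H (H' z) z := by
    intro z
    have h := (myHasDerivAt_phi z).mul (hg z)
    refine h.congr_deriv ?_
    simp only [hH', hφ]; ring
  have i1 : Integrable (fun z => φ z * g' z) volume := by
    refine (hφint.const_mul C').mono' ((hφm.aestronglyMeasurable.mul hg'm))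
      (Eventually.of_forall fun z => ?_)
    rw [Real.norm_eq_abs, abs_mul, abs_of_nonneg (hφnn z)]
    calc φ z * |g' z| ≤ φ z * C' := mul_le_mul_of_nonneg_left (hg'b z) (hφnn z)
    _ = C' * φ z := by ring
  have i2 : Integrable (fun z => φ z * (z * g z)) volume := by
    refine (myIntegrable_abs_phi.mul_const C).mono'
      (hφm.aestronglyMeasurable.mul (aestronglyMeasurable_id.mul hgc.aestronglyMeasurable))
      (Eventually.of_forall fun z => ?_)
    rw [Real.norm_eq_abs, abs_mul, abs_of_nonneg (hφnn z), abs_mul]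
    calc φ z * (|z| * |g z|) ≤ φ z * (|z| * C) :=
          mul_le_mul_of_nonneg_left (mul_le_mul_of_nonneg_left (hgb z) (abs_nonneg z)) (hφnn z)
    _ = |z| * φ z * C := by ring
  have hint' : Integrable H' volume := i1.sub i2
  have htop : Tendsto H atTop (𝓝 0) := by
    apply squeeze_zero_norm (a := fun z => C * φ z)
    · intro z
      rw [Real.norm_eq_abs, abs_mul, abs_of_nonneg (hφnn z)]
      calc φ z * |g z| ≤ φ z * C := mul_le_mul_of_nonneg_left (hgb z) (hφnn z)
      _ = C * φ z := by ring
    · simpa using myTendsto_phi_atTop.const_mul C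
  have hbot : Tendsto H atBot (𝓝 0) := by
    apply squeeze_zero_norm (a := fun z => C * φ z)
    · intro z
      rw [Real.norm_eq_abs, abs_mul, abs_of_nonneg (hφnn z)]
      calc φ z * |g z| ≤ φ z * C := mul_le_mul_of_nonneg_left (hgb z) (hφnn z)
      _ = C * φ z := by ring
    · simpa using myTendsto_phi_atBot.const_mul C
  have e1 : ∫ z in Ioi (0:ℝ), H' z = 0 - H 0 :=
    integral_Ioi_of_hasDerivAt_of_tendsto' (fun x _ => hHd x) hint'.integrableOn htop
  have e2 : ∫ z in Iic (0:ℝ), H' z = H 0 - 0 :=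
    integral_Iic_of_hasDerivAt_of_tendsto' (fun x _ => hHd x) hint'.integrableOn hbot
  have e3 : ∫ z, H' z = 0 := by
    rw [← intervalIntegral.integral_Iic_add_Ioi hint'.integrableOn hint'.integrableOn, e1, e2]; ring
  have e4 : (∫ z, φ z * g' z) - ∫ z, φ z * (z * g z) = 0 := by
    rw [← integral_sub i1 i2]; exact e3
  rw [myGauss_integral_eq, myGauss_integral_eq, ← hφ]
  linarith

/-- `F(h) = E_z[tanh(z√h + h)]` with `z ~ N(0,1)`; note `F 0 = 0`. -/
noncomputable def FNL (h : ℝ) : ℝ :=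
  ∫ z, Real.tanh (z * Real.sqrt h + h) ∂(gaussianReal 0 1)

lemma myOneSubTanhSq (y : ℝ) : 1 - Real.tanh y ^ 2 = 1 / Real.cosh y ^ 2 := by
  rw [Real.tanh_eq_sinh_div_cosh]
  have h1 := Real.cosh_pos y
  have h2 := Real.cosh_sq_sub_sinh_sq y
  field_simp
  all_goals nlinarith

lemma myOneSubTanhSq_nonneg (y : ℝ) : 0 ≤ 1 - Real.tanh y ^ 2 := by
  have := myAbs_tanh_le_one y
  nlinarith [abs_nonneg (Real.tanh y), sq_abs (Real.tanh y)]

lemma myOneSubTanhSq_le_one (y : ℝ) : 1 - Real.tanh y ^ 2 ≤ 1 := by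
  nlinarith [sq_nonneg (Real.tanh y)]

lemma myHasDerivAt_tanh' (y : ℝ) : HasDerivAt Real.tanh (1 - Real.tanh y ^ 2) y := by
  rw [myOneSubTanhSq]; exact myHasDerivAt_tanh y

lemma myHasDerivAt_inner (z : ℝ) {x : ℝ} (hx : 0 < x) :
    HasDerivAt (fun y => z * Real.sqrt y + y) (z * (1 / (2 * Real.sqrt x)) + 1) x := by
  have h1 : HasDerivAt Real.sqrt (1 / (2 * Real.sqrt x)) x := Real.hasDerivAt_sqrt hx.ne'
  exact (h1.const_mul z).add (hasDerivAt_id' x)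

lemma myHasDerivAt_param (z : ℝ) {x : ℝ} (hx : 0 < x) :
    HasDerivAt (fun y => Real.tanh (z * Real.sqrt y + y))
      ((1 - Real.tanh (z * Real.sqrt x + x) ^ 2) * (z * (1 / (2 * Real.sqrt x)) + 1)) x := by
  have h1 : HasDerivAt (Real.tanh ∘ fun y => z * Real.sqrt y + y)
      ((1 - Real.tanh (z * Real.sqrt x + x) ^ 2) * (z * (1 / (2 * Real.sqrt x)) + 1)) x :=
    HasDerivAt.comp x (myHasDerivAt_tanh' _) (myHasDerivAt_inner z hx)
  simpa [Function.comp_def] using h1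

lemma myHasDerivAt_s {h : ℝ} (hh : 0 < h) (z : ℝ) :
    HasDerivAt (fun w => 1 - Real.tanh (w * Real.sqrt h + h) ^ 2)
      (-(2 * Real.tanh (z * Real.sqrt h + h) *
          (1 - Real.tanh (z * Real.sqrt h + h) ^ 2)) * Real.sqrt h) z := by
  have hu : HasDerivAt (fun w : ℝ => w * Real.sqrt h + h) (Real.sqrt h) z := by
    simpa using (hasDerivAt_id z).mul_const (Real.sqrt h) |>.add_const h
  set u := z * Real.sqrt h + h
  have h1 : HasDerivAt (fun y => 1 - Real.tanh y ^ 2)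
      (-(2 * Real.tanh u * (1 - Real.tanh u ^ 2))) u := by
    have := ((myHasDerivAt_tanh' u).pow 2).const_sub 1
    refine this.congr_deriv ?_
    norm_num
  have := h1.comp z hu
  exact this

lemma myDerivPos {h : ℝ} (hh : 0 < h) :
    HasDerivAt FNL (∫ z, (1 - Real.tanh (z * Real.sqrt h + h) ^ 2) *
      (1 - Real.tanh (z * Real.sqrt h + h)) ∂(gaussianReal 0 1)) h ∧
    0 < ∫ z, (1 - Real.tanh (z * Real.sqrt h + h) ^ 2) *
      (1 - Real.tanh (z * Real.sqrt h + h)) ∂(gaussianReal 0 1) := by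
  set γ := gaussianReal 0 1 with hγ
  set c : ℝ := 1 / (2 * Real.sqrt h) with hc
  have hsh : 0 < Real.sqrt h := Real.sqrt_pos.2 hh
  set u : ℝ → ℝ := fun z => z * Real.sqrt h + h with hu
  set s : ℝ → ℝ := fun z => 1 - Real.tanh (u z) ^ 2 with hs
  set g' : ℝ → ℝ := fun z => -(2 * Real.tanh (u z) * (1 - Real.tanh (u z) ^ 2)) * Real.sqrt h
    with hg'
  have hscont : Continuous s := by
    apply Continuous.sub continuous_const
    exact (myContinuous_tanh.comp (by continuity)).pow 2
  have hg'cont : Continuous g' := by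
    apply Continuous.mul _ continuous_const
    apply Continuous.neg
    apply Continuous.mul
    · exact continuous_const.mul (myContinuous_tanh.comp (by continuity))
    · exact continuous_const.sub ((myContinuous_tanh.comp (by continuity)).pow 2)
  have hsb : ∀ z, |s z| ≤ 1 := fun z => by
    rw [abs_of_nonneg (myOneSubTanhSq_nonneg _)]; exact myOneSubTanhSq_le_one _
  have hg'b : ∀ z, |g' z| ≤ 2 * Real.sqrt h := fun z => by
    rw [hg', abs_mul, abs_neg, abs_of_pos hsh, abs_mul, abs_mul]
    have h1 := myAbs_tanh_le_one (u z)
    have h2 : |1 - Real.tanh (u z) ^ 2| ≤ 1 := by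
      rw [abs_of_nonneg (myOneSubTanhSq_nonneg _)]; exact myOneSubTanhSq_le_one _
    have h3 : |(2:ℝ)| = 2 := by norm_num
    rw [h3]
    have h4 : |Real.tanh (u z)| * |1 - Real.tanh (u z) ^ 2| ≤ 1 :=
      mul_le_one₀ h1 (abs_nonneg _) h2
    nlinarith [abs_nonneg (Real.tanh (u z)), abs_nonneg (1 - Real.tanh (u z)^2), hsh.le,
      mul_nonneg (sub_nonneg.2 h4) hsh.le]
  -- derivative of FNL via dominated convergence
  have key : HasDerivAt FNL (∫ z, s z * (z * c + 1) ∂γ) h := by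
    have hmain := hasDerivAt_integral_of_dominated_loc_of_deriv_le
      (μ := γ) (x₀ := h)
      (F := fun x z => Real.tanh (z * Real.sqrt x + x))
      (F' := fun x z => (1 - Real.tanh (z * Real.sqrt x + x) ^ 2) *
        (z * (1 / (2 * Real.sqrt x)) + 1))
      (bound := fun z => |z| * (1 / (2 * Real.sqrt (h/2))) + 1)
      (Metric.ball_mem_nhds h (half_pos hh))
      (Eventually.of_forall fun x =>
        (myContinuous_tanh.comp (by continuity)).aestronglyMeasurable)
      (myIntegrable_bounded (myContinuous_tanh.comp (by continuity)).aestronglyMeasurable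
        (fun z => myAbs_tanh_le_one _))
      (by
        apply Continuous.aestronglyMeasurable
        apply Continuous.mul
        · exact continuous_const.sub ((myContinuous_tanh.comp (by continuity)).pow 2)
        · continuity)
      (Eventually.of_forall fun z x hx => by
        have hx2 : h/2 < x := by
          rw [Metric.mem_ball, Real.dist_eq] at hx
          cases abs_lt.1 hx; linarith
        have hx0 : 0 < x := lt_trans (half_pos hh) hx2
        have hsx : Real.sqrt (h/2) ≤ Real.sqrt x := Real.sqrt_le_sqrt hx2.le
        have hsx0 : 0 < Real.sqrt (h/2) := Real.sqrt_pos.2 (half_pos hh)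
        rw [Real.norm_eq_abs, abs_mul]
        have h2 : |1 - Real.tanh (z * Real.sqrt x + x) ^ 2| ≤ 1 := by
          rw [abs_of_nonneg (myOneSubTanhSq_nonneg _)]; exact myOneSubTanhSq_le_one _
        have h3 : |z * (1 / (2 * Real.sqrt x)) + 1| ≤ |z| * (1 / (2 * Real.sqrt (h/2))) + 1 := by
          refine (abs_add_le _ _).trans ?_
          have : |z * (1 / (2 * Real.sqrt x))| ≤ |z| * (1 / (2 * Real.sqrt (h/2))) := by
            rw [abs_mul]
            apply mul_le_mul_of_nonneg_left _ (abs_nonneg z)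
            rw [abs_of_pos (by positivity)]
            apply one_div_le_one_div_of_le (by positivity)
            nlinarith
          simpa using this
        calc |1 - Real.tanh (z * Real.sqrt x + x) ^ 2| * |z * (1 / (2 * Real.sqrt x)) + 1|
            ≤ 1 * (|z| * (1 / (2 * Real.sqrt (h/2))) + 1) := by
              apply mul_le_mul h2 h3 (abs_nonneg _) one_pos.le
          _ = |z| * (1 / (2 * Real.sqrt (h/2))) + 1 := one_mul _)
      ((myIntegrable_abs.mul_const _).add (integrable_const 1))
      (Eventually.of_forall fun z x hx => by
        have hx2 : h/2 < x := by
          rw [Metric.mem_ball, Real.dist_eq] at hx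
          cases abs_lt.1 hx; linarith
        exact myHasDerivAt_param z (lt_trans (half_pos hh) hx2))
    exact hmain.2
  -- rewrite the derivative
  have hints : Integrable s γ := myIntegrable_bounded hscont.aestronglyMeasurable hsb
  have hintzs : Integrable (fun z => z * s z) γ :=
    myIntegrable_mul_bounded hscont.aestronglyMeasurable hsb
  have hibp : ∫ z, z * s z ∂γ = ∫ z, g' z ∂γ :=
    myGauss_ibp (myHasDerivAt_s hh) hg'cont.aestronglyMeasurable hsb hg'b
  have hintg' : Integrable g' γ := myIntegrable_bounded hg'cont.aestronglyMeasurable hg'b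
  have e1 : ∫ z, s z * (z * c + 1) ∂γ = ∫ z, (c * g' z + s z) ∂γ := by
    have l1 : ∫ z, s z * (z * c + 1) ∂γ = ∫ z, (c * (z * s z) + s z) ∂γ := by
      congr 1; funext z; ring
    rw [l1, integral_add (hintzs.const_mul c) hints, integral_const_mul, hibp,
      integral_add (hintg'.const_mul c) hints, integral_const_mul]
  have e2 : ∀ z, c * g' z + s z = (1 - Real.tanh (u z) ^ 2) * (1 - Real.tanh (u z)) := by
    intro z
    have : c * Real.sqrt h = 1 / 2 := by
      rw [hc]; field_simp
    rw [hg', hs]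
    calc c * (-(2 * Real.tanh (u z) * (1 - Real.tanh (u z) ^ 2)) * Real.sqrt h)
        + (1 - Real.tanh (u z) ^ 2)
        = (c * Real.sqrt h) * (-(2 * Real.tanh (u z) * (1 - Real.tanh (u z) ^ 2)))
          + (1 - Real.tanh (u z) ^ 2) := by ring
      _ = (1 - Real.tanh (u z) ^ 2) * (1 - Real.tanh (u z)) := by rw [this]; ring
  have e3 : ∫ z, (c * g' z + s z) ∂γ
      = ∫ z, (1 - Real.tanh (u z) ^ 2) * (1 - Real.tanh (u z)) ∂γ := by
    congr 1; funext z; exact e2 z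
  constructor
  · have := key
    rw [e1, e3] at this
    exact this
  · rw [← e3, ← e1, e1, e3]
    have hposint : Integrable (fun z => (1 - Real.tanh (u z) ^ 2) * (1 - Real.tanh (u z))) γ := by
      have : (fun z => (1 - Real.tanh (u z) ^ 2) * (1 - Real.tanh (u z)))
          = fun z => c * g' z + s z := by funext z; exact (e2 z).symm
      rw [this]
      exact (hintg'.const_mul c).add hints
    rw [integral_pos_iff_support_of_nonneg_ae]
    · have : Function.support (fun z => (1 - Real.tanh (u z) ^ 2) * (1 - Real.tanh (u z)))
          = Set.univ := by
        apply Set.eq_univ_of_forall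
        intro z
        have h1 := myTanh_lt_one (u z)
        have h2 := myNeg_one_lt_tanh (u z)
        have h4 : 0 < (1 + Real.tanh (u z)) * (1 - Real.tanh (u z)) ^ 2 :=
          mul_pos (by linarith) (pow_pos (by linarith) 2)
        have : 0 < (1 - Real.tanh (u z) ^ 2) * (1 - Real.tanh (u z)) := by nlinarith [h4]
        exact this.ne'
      rw [this]
      simp
    · refine Eventually.of_forall fun z => ?_
      have h1 := myTanh_lt_one (u z)
      have h2 := myNeg_one_lt_tanh (u z)
      have h4 : 0 < (1 + Real.tanh (u z)) * (1 - Real.tanh (u z)) ^ 2 :=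
        mul_pos (by linarith) (pow_pos (by linarith) 2)
      have : 0 < (1 - Real.tanh (u z) ^ 2) * (1 - Real.tanh (u z)) := by nlinarith [h4]
      exact this.le
    · exact hposint

lemma myFNL_zero : FNL 0 = 0 := by
  simp [FNL, Real.sqrt_zero, Real.tanh_zero]

lemma myFNL_cont : Continuous FNL := by
  refine continuous_iff_continuousAt.2 fun h₀ => ?_
  apply continuousAt_of_dominated (bound := fun _ => (1:ℝ))
  · exact Eventually.of_forall fun x =>
      (myContinuous_tanh.comp (by continuity)).aestronglyMeasurable
  · exact Eventually.of_forall fun x => Eventually.of_forall fun z => by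
      simpa [Real.norm_eq_abs] using myAbs_tanh_le_one (z * Real.sqrt x + x)
  · exact integrable_const 1
  · exact Eventually.of_forall fun z =>
      (myContinuous_tanh.comp
        ((continuous_const.mul Real.continuous_sqrt).add continuous_id)).continuousAt

lemma myFNL_strictMono : StrictMonoOn FNL (Ici 0) := by
  apply strictMonoOn_of_deriv_pos (convex_Ici 0) myFNL_cont.continuousOn
  intro x hx
  rw [interior_Ici] at hx
  rw [(myDerivPos hx).1.deriv]
  exact (myDerivPos hx).2

lemma myFNL_lt_one (h : ℝ) : FNL h < 1 := by
  set γ := gaussianReal 0 1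
  have hint : Integrable (fun z => Real.tanh (z * Real.sqrt h + h)) γ :=
    myIntegrable_bounded (myContinuous_tanh.comp (by continuity)).aestronglyMeasurable
      (fun z => myAbs_tanh_le_one _)
  have hpos : 0 < ∫ z, (1 - Real.tanh (z * Real.sqrt h + h)) ∂γ := by
    rw [integral_pos_iff_support_of_nonneg_ae]
    · have : Function.support (fun z => 1 - Real.tanh (z * Real.sqrt h + h)) = Set.univ := by
        apply Set.eq_univ_of_forall
        intro z
        have h1 := myTanh_lt_one (z * Real.sqrt h + h)
        show (1 - Real.tanh (z * Real.sqrt h + h)) ≠ 0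
        exact ne_of_gt (by linarith)
      rw [this]; simp
    · refine Eventually.of_forall fun z => ?_
      have h1 := myTanh_lt_one (z * Real.sqrt h + h)
      simp only [Pi.zero_apply]
      linarith
    · exact (integrable_const 1).sub hint
  have heq : ∫ z, (1 - Real.tanh (z * Real.sqrt h + h)) ∂γ = 1 - FNL h := by
    rw [integral_sub (integrable_const 1) hint]
    simp [FNL, measure_univ]; rfl
  rw [heq] at hpos
  linarith

lemma myFNL_nonneg {h : ℝ} (hh : 0 ≤ h) : 0 ≤ FNL h := by
  rcases eq_or_lt_of_le hh with rfl | hh'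
  · rw [myFNL_zero]
  · rw [← myFNL_zero]
    exact (myFNL_strictMono self_mem_Ici hh'.le hh').le

lemma myFNL_tendsto : Tendsto FNL atTop (𝓝 1) := by
  have key := tendsto_integral_filter_of_dominated_convergence (μ := gaussianReal 0 1)
    (F := fun h z => Real.tanh (z * Real.sqrt h + h)) (f := fun _ => (1:ℝ))
    (bound := fun _ => (1:ℝ)) (l := atTop)
    (Eventually.of_forall fun x =>
      (myContinuous_tanh.comp (by continuity)).aestronglyMeasurable)
    (Eventually.of_forall fun x => Eventually.of_forall fun z => by
      simpa [Real.norm_eq_abs] using myAbs_tanh_le_one (z * Real.sqrt x + x))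
    (integrable_const 1)
    (Eventually.of_forall fun z => by
      have hinner : Tendsto (fun x : ℝ => z * Real.sqrt x + x) atTop atTop := by
        apply tendsto_atTop_mono' atTop (f₁ := fun x : ℝ => x / 2)
        · filter_upwards [eventually_ge_atTop (max (4 * z^2) 0)] with x hx
          have hx0 : (0:ℝ) ≤ x := le_trans (le_max_right _ _) hx
          have hx4 : 4 * z^2 ≤ x := le_trans (le_max_left _ _) hx
          have hsq : Real.sqrt x * Real.sqrt x = x := Real.mul_self_sqrt hx0
          have h2 : 2 * |z| ≤ Real.sqrt x := by
            have := Real.sqrt_le_sqrt hx4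
            have h4 : Real.sqrt (4 * z^2) = 2 * |z| := by
              have he : (4:ℝ) * z^2 = (2*|z|)^2 := by rw [mul_pow, sq_abs]; ring
              rw [he, Real.sqrt_sq (by positivity)]
            linarith [h4 ▸ this]
          nlinarith [mul_le_mul_of_nonneg_left h2 (Real.sqrt_nonneg x),
            mul_le_mul_of_nonneg_right (neg_abs_le z) (Real.sqrt_nonneg x)]
        · exact tendsto_id.atTop_div_const two_pos
      exact myTendsto_tanh_atTop.comp hinner)
  have h1 : ∫ _z, (1:ℝ) ∂(gaussianReal 0 1) = 1 := by simp [measure_univ]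
  rw [h1] at key
  exact key

lemma myFNL_surj {x : ℝ} (hx0 : 0 ≤ x) (hx1 : x < 1) : ∃ h, 0 ≤ h ∧ FNL h = x := by
  have hev : ∀ᶠ h in atTop, x < FNL h := by
    have : Set.Ioi x ∈ 𝓝 (1:ℝ) := Ioi_mem_nhds hx1
    exact myFNL_tendsto.eventually this
  obtain ⟨h₀, hh₀, hh₀0⟩ := (hev.and (eventually_ge_atTop (0:ℝ))).exists
  have hmem : x ∈ Icc (FNL 0) (FNL h₀) := by
    rw [myFNL_zero]; exact ⟨hx0, hh₀.le⟩
  obtain ⟨h, hh, hfh⟩ := intermediate_value_Icc hh₀0 (myFNL_cont.continuousOn) hmem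
  exact ⟨h, hh.1, hfh⟩

/-- `F` is invertible on `[0,∞)`: it is injective there and admits an inverse `G`
defined on `[0,1)` which is nonnegative, increasing, and tends to `+∞` as `x → 1⁻`. -/
theorem FNL_invertible :
    Set.InjOn FNL (Set.Ici 0) ∧
    ∃ G : ℝ → ℝ,
      (∀ h ∈ Set.Ici (0 : ℝ), G (FNL h) = h) ∧
      (∀ x ∈ Set.Ico (0 : ℝ) 1, FNL (G x) = x) ∧
      (∀ x ∈ Set.Ico (0 : ℝ) 1, 0 ≤ G x) ∧
      MonotoneOn G (Set.Ico (0 : ℝ) 1) ∧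
      Tendsto G (nhdsWithin 1 (Set.Iio 1)) atTop := by
  have hinj : Set.InjOn FNL (Set.Ici 0) := myFNL_strictMono.injOn
  set G : ℝ → ℝ := Function.invFunOn FNL (Set.Ici 0) with hG
  have hleft : ∀ h ∈ Set.Ici (0:ℝ), G (FNL h) = h := fun h hh =>
    hinj.leftInvOn_invFunOn hh
  have hex : ∀ x ∈ Set.Ico (0:ℝ) 1, ∃ a ∈ Set.Ici (0:ℝ), FNL a = x := by
    intro x hx
    obtain ⟨h, hh0, hfh⟩ := myFNL_surj hx.1 hx.2
    exact ⟨h, hh0, hfh⟩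
  have hright : ∀ x ∈ Set.Ico (0:ℝ) 1, FNL (G x) = x := fun x hx =>
    Function.invFunOn_eq (hex x hx)
  have hmem : ∀ x ∈ Set.Ico (0:ℝ) 1, G x ∈ Set.Ici (0:ℝ) := fun x hx =>
    Function.invFunOn_mem (hex x hx)
  refine ⟨hinj, G, hleft, hright, fun x hx => hmem x hx, ?_, ?_⟩
  · intro x hx y hy hxy
    have h1 : FNL (G x) ≤ FNL (G y) := by
      rw [hright x hx, hright y hy]; exact hxy
    exact (myFNL_strictMono.le_iff_le (hmem x hx) (hmem y hy)).1 h1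
  · rw [tendsto_atTop]
    intro M
    set b := FNL (max M 0) with hb
    have hb1 : b < 1 := myFNL_lt_one _
    have hb0 : 0 ≤ b := myFNL_nonneg (le_max_right M 0)
    filter_upwards [Ioo_mem_nhdsLT_of_mem (⟨hb1, le_rfl⟩ : (1:ℝ) ∈ Ioc b 1)] with x hx
    have hx0 : 0 ≤ x := le_trans hb0 hx.1.le
    have hxIco : x ∈ Set.Ico (0:ℝ) 1 := ⟨hx0, hx.2⟩
    have hlt : FNL (max M 0) < FNL (G x) := by
      rw [hright x hxIco]; exact hx.1
    have hmax : (max M 0) ∈ Set.Ici (0:ℝ) := le_max_right M 0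
    have h2 := (myFNL_strictMono.lt_iff_lt hmax (hmem x hxIco)).1 hlt
    exact le_trans (le_max_left M 0) h2.le
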